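/- The ratio of consecutive terms of the sequence b tends to one half: lim_{k→∞} b_{k+1}/b_k = 1/2. -/

import Mathlib

open Real Filter Topology

theorem b_ratio_tendsto_half (a : ℕ → ℝ)
    (ha1 : a 1 = Real.sqrt 2)
    (ha : ∀ k ≥ 1, a (k + 1) = Real.sqrt (2 + a k))
    (b : ℕ → ℝ)
    (hb : ∀ k ≥ 1, b k = Real.sqrt (2 - a k) / a (k + 1)) :
    Tendsto (fun k : ℕ => b (k + 1) / b k) atTop (𝓝 (1 / 2)) := by
  have hsqrt2 : (0:ℝ) < Real.sqrt 2 := Real.sqrt_pos.mpr (by norm_num)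
  have hbound : ∀ n : ℕ, Real.sqrt 2 ≤ a (n+1) ∧ a (n+1) < 2 := by
    intro n
    induction n with
    | zero =>
      refine ⟨le_of_eq ha1.symm, ?_⟩
      rw [ha1]
      nlinarith [Real.sq_sqrt (by norm_num : (0:ℝ) ≤ 2), Real.sqrt_nonneg 2]
    | succ m ih =>
      have h2 : a (m+1+1) = Real.sqrt (2 + a (m+1)) := ha (m+1) (by omega)
      constructor
      · rw [h2]
        have : (2:ℝ) ≤ 2 + a (m+1) := by linarith [ih.1, hsqrt2.le]
        exact Real.sqrt_le_sqrt this
      · rw [h2]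
        have h4 : (2:ℝ) + a (m+1) < 4 := by linarith [ih.2]
        calc Real.sqrt (2 + a (m+1)) < Real.sqrt 4 :=
              Real.sqrt_lt_sqrt (by linarith [ih.1, hsqrt2.le]) h4
          _ = 2 := by
              rw [show (4:ℝ) = 2^2 by norm_num, Real.sqrt_sq (by norm_num)]
  have hpos : ∀ n, (0:ℝ) < a (n+1) := fun n => lt_of_lt_of_le hsqrt2 (hbound n).1
  have hsq : ∀ n, (a (n+2))^2 = 2 + a (n+1) := by
    intro n
    rw [ha (n+1) (by omega), Real.sq_sqrt (by linarith [hpos n])]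
  have key : ∀ n, 2 - a (n+2) = (2 - a (n+1)) / (2 + a (n+2)) := by
    intro n
    have h2 := hsq n
    have h3 : (0:ℝ) < 2 + a (n+2) := by linarith [hpos (n+1)]
    field_simp
    nlinarith
  have hdecay : ∀ n, 2 - a (n+1) ≤ 2 * (1/2:ℝ)^n := by
    intro n
    induction n with
    | zero => simp [ha1]
    | succ m ih =>
      rw [key m]
      have h1 : (0:ℝ) ≤ 2 - a (m+1) := by linarith [(hbound m).2]
      have h2 : (2:ℝ) ≤ 2 + a (m+2) := by linarith [hpos (m+1)]
      calc (2 - a (m+1)) / (2 + a (m+2)) ≤ (2 - a (m+1)) / 2 := by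
            gcongr
        _ ≤ (2 * (1/2:ℝ)^m) / 2 := by gcongr
        _ = 2 * (1/2:ℝ)^(m+1) := by ring
  have htend : Tendsto (fun n => a (n+1)) atTop (𝓝 2) := by
    have h0 : Tendsto (fun n : ℕ => 2 * (1/2:ℝ)^n) atTop (𝓝 0) := by
      have := tendsto_pow_atTop_nhds_zero_of_lt_one
        (by norm_num : (0:ℝ) ≤ 1/2) (by norm_num : (1/2:ℝ) < 1)
      simpa using this.const_mul 2
    have hz : Tendsto (fun n => 2 - a (n+1)) atTop (𝓝 0) :=
      squeeze_zero (fun n => by linarith [(hbound n).2]) hdecay h0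
    have := hz.const_sub 2
    simpa using this
  have htend2 : Tendsto (fun n => a (n+2)) atTop (𝓝 2) := by
    have := htend.comp (tendsto_add_atTop_nat 1)
    simpa [Function.comp_def, add_assoc] using this
  have hlim : Tendsto (fun k : ℕ => a (k+1) / (a (k+2))^2) atTop (𝓝 (1/2)) := by
    have h := htend.div (htend2.pow 2) (by norm_num : (2:ℝ)^2 ≠ 0)
    convert h using 2
    norm_num
    norm_num
  refine hlim.congr' ?_
  filter_upwards [eventually_ge_atTop 1] with k hk
  obtain ⟨n, rfl⟩ : ∃ n, k = n + 1 := ⟨k - 1, by omega⟩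
  rw [hb (n+1) (by omega), hb (n+1+1) (by omega)]
  have hne1 : a (n+2) ≠ 0 := (hpos (n+1)).ne'
  have hne2 : a (n+3) ≠ 0 := (hpos (n+2)).ne'
  have hspos : (0:ℝ) < Real.sqrt (2 - a (n+1)) :=
    Real.sqrt_pos.mpr (by linarith [(hbound n).2])
  have hs : Real.sqrt (2 - a (n+2)) = Real.sqrt (2 - a (n+1)) / a (n+3) := by
    rw [key n, Real.sqrt_div (by linarith [(hbound n).2]), ha (n+2) (by omega)]
  show a (n+2) / (a (n+3))^2 = _
  rw [hs]
  field_simp
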